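/- Let G be a finite abstract simplicial complex ordered so that |x| ≤ |y| whenever x precedes y, and let h : G → ℂ. Then the matrix conj(g)·L is upper triangular with diagonal entries |h(x)|² for x ∈ G. -/

import Mathlib

open Finset

def IsSimplicialComplex (G : Finset (Finset ℕ)) : Prop :=
  (∀ x ∈ G, x.Nonempty) ∧ ∀ x ∈ G, ∀ y ⊆ x, y.Nonempty → y ∈ G

lemma sum_pow_c (s : Finset ℕ) : ∑ m ∈ s.powerset, (-1:ℂ)^m.card = if s = ∅ then 1 else 0 := by
  have hz := Finset.sum_powerset_neg_one_pow_card (x := s)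
  calc ∑ m ∈ s.powerset, (-1:ℂ)^m.card
      = ((∑ m ∈ s.powerset, (-1:ℤ)^m.card : ℤ) : ℂ) := by push_cast; rfl
    _ = _ := by rw [hz]; split_ifs <;> simp

lemma signsum (u z : Finset ℕ) (hu : u.Nonempty) (huz : u ⊆ z) :
    ∑ w ∈ z.powerset.filter (fun w => u ⊆ w), (-1:ℂ)^(w.card - 1)
      = if z = u then (-1:ℂ)^(z.card-1) else 0 := by
  have himg : z.powerset.filter (fun w => u ⊆ w)
      = (z \ u).powerset.image (fun S => S ∪ u) := by
    ext w
    simp only [Finset.mem_filter, Finset.mem_powerset, Finset.mem_image]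
    constructor
    · rintro ⟨hwz, huw⟩
      exact ⟨w \ u, Finset.sdiff_subset_sdiff hwz le_rfl,
        Finset.sdiff_union_of_subset huw⟩
    · rintro ⟨S, hS, rfl⟩
      exact ⟨Finset.union_subset (hS.trans Finset.sdiff_subset) huz,
        Finset.subset_union_right⟩
  have hdisj : ∀ S ∈ (z \ u).powerset, Disjoint S u := fun S hS =>
    Finset.disjoint_of_subset_left (Finset.mem_powerset.1 hS) Finset.sdiff_disjoint
  rw [himg, Finset.sum_image]
  · have hterm : ∀ S ∈ (z \ u).powerset,
        (-1:ℂ)^((S ∪ u).card - 1) = (-1:ℂ)^S.card * (-1:ℂ)^(u.card - 1) := by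
      intro S hS
      rw [Finset.card_union_of_disjoint (hdisj S hS), ← pow_add]
      congr 1
      have := hu.card_pos
      omega
    rw [Finset.sum_congr rfl hterm, ← Finset.sum_mul,
      sum_pow_c]
    by_cases hzu : z = u
    · subst hzu
      simp
    · have : ¬ (z \ u = ∅) := by
        intro hempty
        exact hzu (Finset.Subset.antisymm (by
          intro a ha
          by_contra hau
          exact (Finset.eq_empty_iff_forall_notMem.1 hempty a)
            (Finset.mem_sdiff.2 ⟨ha, hau⟩)) huz)
      simp [this, hzu]
  · intro S hS T hT hST
    have h1 : S = (S ∪ u) \ u := by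
      rw [Finset.union_sdiff_right, Finset.sdiff_eq_self_of_disjoint (hdisj S hS)]
    have h2 : T = (T ∪ u) \ u := by
      rw [Finset.union_sdiff_right, Finset.sdiff_eq_self_of_disjoint (hdisj T hT)]
    rw [h1, h2, show S ∪ u = T ∪ u from hST]

lemma entry (G : Finset (Finset ℕ)) (hG : IsSimplicialComplex G)
    (h : Finset ℕ → ℂ) (x y : {x // x ∈ G}) :
    ((Matrix.of (fun (x y : {x // x ∈ G}) =>
      (-1 : ℂ) ^ (x.1.card - 1) * (-1 : ℂ) ^ (y.1.card - 1) *
        ∑ z ∈ G.filter (fun z => x.1 ⊆ z ∧ y.1 ⊆ z), h z)).map (starRingEnd ℂ) *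
     Matrix.of (fun (x y : {x // x ∈ G}) =>
      ∑ z ∈ G.filter (fun z => z ⊆ x.1 ∧ z ⊆ y.1), h z)) x y
    = ∑ z ∈ G.filter (fun z => x.1 ⊆ z ∧ z ⊆ y.1),
        ((-1:ℂ)^(x.1.card - 1) * (-1:ℂ)^(z.card - 1)) * ((starRingEnd ℂ) (h z) * h z) := by
  classical
  rw [Matrix.mul_apply]
  simp only [Matrix.map_apply, Matrix.of_apply, map_mul, map_pow, map_neg, map_one, map_sum]
  -- convert subtype sum to sum over G
  rw [← Finset.sum_subtype G (fun _ => Iff.rfl) (fun w =>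
    ((-1:ℂ) ^ (x.1.card - 1) * (-1:ℂ) ^ (w.card - 1) *
      ∑ z ∈ G.filter (fun z => x.1 ⊆ z ∧ w ⊆ z), (starRingEnd ℂ) (h z)) *
    ∑ u ∈ G.filter (fun u => u ⊆ w ∧ u ⊆ y.1), h u)]
  -- expand each w-term into a double sum
  have hw : ∀ w ∈ G,
      ((-1:ℂ) ^ (x.1.card - 1) * (-1:ℂ) ^ (w.card - 1) *
        ∑ z ∈ G.filter (fun z => x.1 ⊆ z ∧ w ⊆ z), (starRingEnd ℂ) (h z)) *
      (∑ u ∈ G.filter (fun u => u ⊆ w ∧ u ⊆ y.1), h u)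
      = ∑ z ∈ G, ∑ u ∈ G,
          (if x.1 ⊆ z then (1:ℂ) else 0) * (if u ⊆ y.1 then (1:ℂ) else 0) *
          ((-1:ℂ)^(x.1.card - 1) * (starRingEnd ℂ) (h z) * h u) *
          (if w ⊆ z ∧ u ⊆ w then (-1:ℂ)^(w.card - 1) else 0) := by
    intro w hwG
    rw [Finset.sum_filter, Finset.sum_filter]
    simp only [Finset.mul_sum, Finset.sum_mul]
    rw [Finset.sum_comm]
    refine Finset.sum_congr rfl fun z hz => Finset.sum_congr rfl fun u hu => ?_
    by_cases h1 : x.1 ⊆ z <;> by_cases h2 : w ⊆ z <;> by_cases h3 : u ⊆ w <;>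
      by_cases h4 : u ⊆ y.1 <;> simp [h1, h2, h3, h4] <;> ring
  rw [Finset.sum_congr rfl hw]
  rw [Finset.sum_comm]
  refine Eq.trans (Finset.sum_congr rfl fun z hz => Finset.sum_comm) ?_
  -- now ∑ z ∑ u ∑ w; evaluate inner w-sum
  have inner : ∀ z ∈ G, ∀ u ∈ G,
      (∑ w ∈ G, (if w ⊆ z ∧ u ⊆ w then (-1:ℂ)^(w.card - 1) else 0))
      = if z = u then (-1:ℂ)^(z.card - 1) else 0 := by
    intro z hz u hu
    rw [← Finset.sum_filter]
    by_cases huz : u ⊆ z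
    · have hset : G.filter (fun w => w ⊆ z ∧ u ⊆ w)
          = z.powerset.filter (fun w => u ⊆ w) := by
        ext w
        simp only [Finset.mem_filter, Finset.mem_powerset]
        constructor
        · rintro ⟨_, hwz, huw⟩; exact ⟨hwz, huw⟩
        · rintro ⟨hwz, huw⟩
          exact ⟨hG.2 z hz w hwz ((hG.1 u hu).mono huw), hwz, huw⟩
      rw [hset, signsum u z (hG.1 u hu) huz]
    · have hne : z ≠ u := fun hzu => huz (hzu ▸ Finset.Subset.refl u)
      have hempty : G.filter (fun w => w ⊆ z ∧ u ⊆ w) = ∅ := by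
        apply Finset.filter_eq_empty_iff.2
        rintro w _ ⟨hwz, huw⟩
        exact huz (huw.trans hwz)
      rw [hempty, Finset.sum_empty, if_neg hne]
  have step : ∀ z ∈ G, (∑ u ∈ G, ∑ w ∈ G,
      (if x.1 ⊆ z then (1:ℂ) else 0) * (if u ⊆ y.1 then (1:ℂ) else 0) *
      ((-1:ℂ)^(x.1.card - 1) * (starRingEnd ℂ) (h z) * h u) *
      (if w ⊆ z ∧ u ⊆ w then (-1:ℂ)^(w.card - 1) else 0))
      = if z ∈ G then ((if x.1 ⊆ z then (1:ℂ) else 0) * (if z ⊆ y.1 then (1:ℂ) else 0) *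
          ((-1:ℂ)^(x.1.card - 1) * (starRingEnd ℂ) (h z) * h z) *
          ((-1:ℂ)^(z.card - 1))) else 0 := by
    intro z hz
    have : ∀ u ∈ G, (∑ w ∈ G,
        (if x.1 ⊆ z then (1:ℂ) else 0) * (if u ⊆ y.1 then (1:ℂ) else 0) *
        ((-1:ℂ)^(x.1.card - 1) * (starRingEnd ℂ) (h z) * h u) *
        (if w ⊆ z ∧ u ⊆ w then (-1:ℂ)^(w.card - 1) else 0))
        = if z = u then ((if x.1 ⊆ z then (1:ℂ) else 0) * (if u ⊆ y.1 then (1:ℂ) else 0) *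
            ((-1:ℂ)^(x.1.card - 1) * (starRingEnd ℂ) (h z) * h u) *
            ((-1:ℂ)^(z.card - 1))) else 0 := by
      intro u hu
      rw [← Finset.mul_sum, inner z hz u hu, mul_ite, mul_zero]
    rw [Finset.sum_congr rfl this, Finset.sum_ite_eq G z _]
  rw [Finset.sum_congr rfl step]
  rw [Finset.sum_filter]
  refine Finset.sum_congr rfl fun z hz => ?_
  rw [if_pos hz]
  by_cases h1 : x.1 ⊆ z <;> by_cases h2 : z ⊆ y.1 <;> simp [h1, h2] <;> ring

theorem stmt10 (G : Finset (Finset ℕ)) (hG : IsSimplicialComplex G)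
    (h : Finset ℕ → ℂ)
    (ord : {x // x ∈ G} → ℕ) (hord_inj : Function.Injective ord)
    (hord : ∀ x y : {x // x ∈ G}, ord x < ord y → x.1.card ≤ y.1.card)
    (L g : Matrix {x // x ∈ G} {x // x ∈ G} ℂ)
    (hL : L = Matrix.of (fun x y =>
      ∑ z ∈ G.filter (fun z => z ⊆ x.1 ∧ z ⊆ y.1), h z))
    (hg : g = Matrix.of (fun x y =>
      (-1 : ℂ) ^ (x.1.card - 1) * (-1 : ℂ) ^ (y.1.card - 1) *
        ∑ z ∈ G.filter (fun z => x.1 ⊆ z ∧ y.1 ⊆ z), h z)) :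
    (∀ x y : {x // x ∈ G}, ord y < ord x → (g.map (starRingEnd ℂ) * L) x y = 0)
    ∧ ∀ x : {x // x ∈ G},
        (g.map (starRingEnd ℂ) * L) x x = ((‖h x.1‖) ^ 2 : ℂ) := by
  subst hL hg
  constructor
  · intro x y hxy
    rw [entry G hG h x y]
    have hempty : G.filter (fun z => x.1 ⊆ z ∧ z ⊆ y.1) = ∅ := by
      apply Finset.filter_eq_empty_iff.2
      rintro z hz ⟨hxz, hzy⟩
      have hsub : x.1 ⊆ y.1 := hxz.trans hzy
      have hc : y.1.card ≤ x.1.card := hord y x hxy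
      have : x.1 = y.1 := Finset.eq_of_subset_of_card_le hsub hc
      have : x = y := Subtype.ext this
      subst this
      exact absurd hxy (lt_irrefl _)
    rw [hempty, Finset.sum_empty]
  · intro x
    rw [entry G hG h x x]
    have hsingle : G.filter (fun z => x.1 ⊆ z ∧ z ⊆ x.1) = {x.1} := by
      ext z
      simp only [Finset.mem_filter, Finset.mem_singleton]
      constructor
      · rintro ⟨_, hxz, hzx⟩; exact Finset.Subset.antisymm hzx hxz
      · rintro rfl; exact ⟨x.2, Finset.Subset.refl _, Finset.Subset.refl _⟩
    rw [hsingle, Finset.sum_singleton]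
    have hsq : (-1:ℂ)^(x.1.card - 1) * (-1:ℂ)^(x.1.card - 1) = 1 := by
      rw [← pow_add, ← two_mul, pow_mul, neg_one_sq, one_pow]
    rw [hsq, one_mul]
    rw [Complex.conj_mul']
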